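/- Fix R > 0 and an integer m ≥ 0. For each n ≥ 1, let (x₁,…,x_n) be uniformly distributed on the closed Euclidean ball {x ∈ ℝ^n : ∑ x_k² ≤ nR²}. Then E[x₁^{2m}] = n^m·R^{2m}·Γ(m + 1/2)·Γ(1 + n/2) / ( √π · Γ(m + 1 + n/2) ), and lim_{n→∞} E[x₁^{2m}] = (2m−1)!!·R^{2m}, where (2m−1)!! = 1·3·5⋯(2m−1) (with (−1)!! = 1). Moreover all odd moments vanish: E[x₁^{2m+1}] = 0. -/

import Mathlib

open MeasureTheory ProbabilityTheory Filter Real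

/-- The closed Euclidean ball `{x ∈ ℝⁿ : ∑ x_k² ≤ n R²}`. -/
def scaledBall (n : ℕ) (R : ℝ) : Set (Fin n → ℝ) :=
  {x | ∑ k, (x k) ^ 2 ≤ n * R ^ 2}

/-- The uniform probability measure (normalized Lebesgue measure) on the ball
`{x ∈ ℝⁿ : ∑ x_k² ≤ n R²}`. -/
noncomputable def scaledBallUnif (n : ℕ) (R : ℝ) : Measure (Fin n → ℝ) :=
  (volume (scaledBall n R))⁻¹ • volume.restrict (scaledBall n R)

section Helpers

open Set

/-- Gamma recursion iterated. -/
lemma my_gamma_add_nat {x : ℝ} (hx : 0 < x) (m : ℕ) :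
    Real.Gamma (x + m) = (∏ j ∈ Finset.range m, (x + j)) * Real.Gamma x := by
  induction m with
  | zero => simp
  | succ m ih =>
    have hxm : x + (m : ℝ) ≠ 0 := by positivity
    have : x + ((m : ℕ) + 1 : ℕ) = (x + m) + 1 := by push_cast; ring
    rw [this, Real.Gamma_add_one hxm, ih, Finset.prod_range_succ]
    push_cast; ring

lemma my_dfac (m : ℕ) :
    ((Nat.doubleFactorial (2 * m - 1) : ℝ)) * Real.sqrt π = 2 ^ m * Real.Gamma (m + 1 / 2) := by
  induction m with
  | zero => simp [← Real.Gamma_one_half_eq, Nat.doubleFactorial]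
  | succ m ih =>
    have h1 : 2 * (m + 1) - 1 = 2 * m + 1 := by omega
    have h2 : (Nat.doubleFactorial (2 * m + 1) : ℝ) =
        (2 * m + 1) * (Nat.doubleFactorial (2 * m - 1) : ℝ) := by
      cases m with
      | zero => simp [Nat.doubleFactorial]
      | succ m =>
        have : 2 * (m + 1) + 1 = (2 * m + 1) + 2 := by omega
        rw [this, Nat.doubleFactorial_add_two]
        have : 2 * (m + 1) - 1 = 2 * m + 1 := by omega
        rw [this]; push_cast; ring
    have hg : Real.Gamma ((m : ℝ) + 1 + 1 / 2) = ((m : ℝ) + 1 / 2) * Real.Gamma (m + 1 / 2) := by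
      have hne : (m : ℝ) + 1 / 2 ≠ 0 := by positivity
      have : (m : ℝ) + 1 + 1 / 2 = ((m : ℝ) + 1 / 2) + 1 := by ring
      rw [this, Real.Gamma_add_one hne]
    rw [h1, h2]
    push_cast
    rw [hg]
    calc (2 * (m : ℝ) + 1) * ((2 * m - 1).doubleFactorial : ℝ) * √π
        = (2 * (m : ℝ) + 1) * (((2 * m - 1).doubleFactorial : ℝ) * √π) := by ring
      _ = (2 * (m : ℝ) + 1) * (2 ^ m * Real.Gamma (m + 1 / 2)) := by rw [ih]
      _ = 2 ^ (m + 1) * (((m : ℝ) + 1 / 2) * Real.Gamma (m + 1 / 2)) := by ring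





lemma my_realBeta {a b : ℝ} (ha : 0 < a) (hb : 0 < b) :
    ∫ u in (0:ℝ)..1, u ^ (a - 1) * (1 - u) ^ (b - 1) =
      Real.Gamma a * Real.Gamma b / Real.Gamma (a + b) := by
  have hcb : Complex.betaIntegral a b =
      ((∫ u in (0:ℝ)..1, u ^ (a - 1) * (1 - u) ^ (b - 1) : ℝ) : ℂ) := by
    rw [Complex.betaIntegral, ← intervalIntegral.integral_ofReal]
    refine intervalIntegral.integral_congr fun x hx => ?_
    rw [Set.uIcc_of_le zero_le_one] at hx
    have e1 : ((a : ℂ) - 1) = ((a - 1 : ℝ) : ℂ) := by push_cast; ring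
    have e2 : ((b : ℂ) - 1) = ((b - 1 : ℝ) : ℂ) := by push_cast; ring
    have e3 : (1 - (x : ℂ)) = ((1 - x : ℝ) : ℂ) := by push_cast; ring
    rw [e1, e2, e3, ← Complex.ofReal_cpow hx.1, ← Complex.ofReal_cpow (by linarith [hx.2] : (0:ℝ) ≤ 1 - x)]
    push_cast
    ring
  have h := Complex.Gamma_mul_Gamma_eq_betaIntegral (s := (a:ℂ)) (t := (b:ℂ))
    (by simpa using ha) (by simpa using hb)
  have hne : Complex.Gamma ((a : ℂ) + b) ≠ 0 :=
    Complex.Gamma_ne_zero_of_re_pos (by simpa using add_pos ha hb)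
  have : Complex.betaIntegral a b = Complex.Gamma a * Complex.Gamma b / Complex.Gamma (a + b) := by
    field_simp [h]
    rw [h]; ring
  rw [hcb] at this
  have h2 : ((∫ u in (0:ℝ)..1, u ^ (a - 1) * (1 - u) ^ (b - 1) : ℝ) : ℂ) =
      ((Real.Gamma a * Real.Gamma b / Real.Gamma (a + b) : ℝ) : ℂ) := by
    rw [this, ← Complex.ofReal_add, Complex.Gamma_ofReal, Complex.Gamma_ofReal,
      Complex.Gamma_ofReal]
    push_cast
    ring
  exact_mod_cast h2

lemma my_measurableSet_sumSq (k : ℕ) (s : ℝ) :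
    MeasurableSet {y : Fin k → ℝ | ∑ i, y i ^ 2 ≤ s} := by
  have : Continuous fun y : Fin k → ℝ => ∑ i, y i ^ 2 := by continuity
  exact measurableSet_le this.measurable measurable_const

lemma my_vol_sumSq_neg (k : ℕ) {s : ℝ} (hs : s < 0) :
    volume {y : Fin k → ℝ | ∑ i, y i ^ 2 ≤ s} = 0 := by
  convert measure_empty (μ := (volume : Measure (Fin k → ℝ)))
  ext y
  simp only [Set.mem_setOf_eq, Set.mem_empty_iff_false, iff_false, not_le]
  exact lt_of_lt_of_le hs (by positivity)

lemma my_vol_sumSq (k : ℕ) {s : ℝ} (hs : 0 ≤ s) :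
    volume {y : Fin k → ℝ | ∑ i, y i ^ 2 ≤ s} =
      ENNReal.ofReal (Real.sqrt s ^ k * (Real.sqrt π ^ k / Real.Gamma (k / 2 + 1))) := by
  cases k with
  | zero =>
    have h1 : {y : Fin 0 → ℝ | ∑ i, y i ^ 2 ≤ s} = Set.univ := by
      ext y; simp [hs]
    rw [h1]
    have : (volume : Measure (Fin 0 → ℝ)) Set.univ = 1 := by
      rw [MeasureTheory.volume_pi, Measure.pi_univ]
      simp
    rw [this]
    norm_num [Real.Gamma_one]
  | succ k =>
    have hvp := (EuclideanSpace.volume_preserving_symm_measurableEquiv_toLp (Fin (k+1)))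
    have hsum : ∀ x : EuclideanSpace ℝ (Fin (k+1)),
        (∑ i, (((MeasurableEquiv.toLp 2 (Fin (k+1) → ℝ)).symm) x) i ^ 2) = ∑ i, x i ^ 2 := by
      intro x; rfl
    have hpre : ((MeasurableEquiv.toLp 2 (Fin (k+1) → ℝ)).symm) ⁻¹'
        {y : Fin (k+1) → ℝ | ∑ i, y i ^ 2 ≤ s} = Metric.closedBall 0 (Real.sqrt s) := by
      ext x
      simp only [Set.mem_preimage, Set.mem_setOf_eq, Metric.mem_closedBall, dist_zero_right]
      rw [hsum x, EuclideanSpace.norm_eq]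
      simp_rw [Real.norm_eq_abs, sq_abs]
      rw [show Real.sqrt (∑ i, x i ^ 2) ≤ Real.sqrt s ↔ (∑ i, x i ^ 2) ≤ s from
        Real.sqrt_le_sqrt_iff (by positivity)]
    rw [← hvp.measure_preimage (my_measurableSet_sumSq (k+1) s).nullMeasurableSet, hpre,
      EuclideanSpace.volume_closedBall]
    rw [Fintype.card_fin, ← ENNReal.ofReal_pow (Real.sqrt_nonneg _),
      ← ENNReal.ofReal_mul (by positivity)]

/-- The one-dimensional integral computation. -/
lemma my_oneDim (m k : ℕ) {c : ℝ} (hc : 0 < c) :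
    ∫ t : ℝ, t ^ (2 * m) * (if 0 ≤ c - t ^ 2 then Real.sqrt (c - t ^ 2) ^ k else 0) =
      c ^ m * Real.sqrt c ^ (k + 1) *
        (Real.Gamma ((m : ℝ) + 1 / 2) * Real.Gamma ((k : ℝ) / 2 + 1) /
          Real.Gamma (((m : ℝ) + 1 / 2) + ((k : ℝ) / 2 + 1))) := by
  set W : ℝ → ℝ := fun s => if 0 ≤ s then Real.sqrt s ^ k else 0 with hW
  set F : ℝ → ℝ := fun u => u ^ (2 * m) * W (c - u ^ 2) with hF
  -- step 1: evenness
  have h1 : ∫ t : ℝ, t ^ (2 * m) * W (c - t ^ 2) = 2 * ∫ t in Ioi (0:ℝ), F t := by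
    rw [← integral_comp_abs (f := F)]
    congr 1 with t
    rw [hF]
    simp only []
    rw [sq_abs, pow_mul, pow_mul, sq_abs]
  -- step 2: substitution t^2 = s on Ioi 0
  set G : ℝ → ℝ := fun s => (1/2 : ℝ) * (s ^ ((m : ℝ) - 1/2) * W (c - s)) with hG
  have h2 : ∫ t in Ioi (0:ℝ), F t = ∫ s in Ioi (0:ℝ), G s := by
    rw [← integral_comp_rpow_Ioi G (p := 2) two_ne_zero]
    refine setIntegral_congr_fun measurableSet_Ioi fun x hx => ?_
    have hx0 : (0:ℝ) < x := hx
    have hrp : x ^ (2:ℝ) = x ^ 2 := by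
      rw [← Real.rpow_natCast x 2]; norm_num
    rw [smul_eq_mul, hG, hF]
    simp only [hrp]
    have h3 : (x ^ 2 : ℝ) ^ ((m : ℝ) - 1/2) = x ^ (2 * ((m : ℝ) - 1/2)) := by
      rw [← Real.rpow_natCast x 2, ← Real.rpow_mul hx0.le]
      norm_num
    rw [h3]
    have h4 : |(2:ℝ)| * x ^ ((2:ℝ) - 1) * (1/2 * (x ^ (2 * ((m:ℝ) - 1/2)) * W (c - x ^ 2)))
        = (x ^ ((2:ℝ) - 1) * x ^ (2 * ((m:ℝ) - 1/2))) * W (c - x ^ 2) := by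
      rw [abs_of_nonneg (by norm_num : (0:ℝ) ≤ 2)]; ring
    rw [h4, ← Real.rpow_add hx0]
    have : (2:ℝ) - 1 + 2 * ((m:ℝ) - 1/2) = (2 * m : ℕ) := by push_cast; ring
    rw [this, Real.rpow_natCast]
  -- step 3: cut off at c
  set H : ℝ → ℝ := fun s => s ^ ((m : ℝ) - 1/2) * W (c - s) with hH
  have h3 : ∫ s in Ioi (0:ℝ), G s = (1/2 : ℝ) * ∫ s in Ioi (0:ℝ), H s := by
    rw [← MeasureTheory.integral_const_mul]
  have h4a : ∫ s in Ioi (0:ℝ), H s = ∫ s in Ioi (0:ℝ), (Ioc (0:ℝ) c).indicator H s := by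
    refine setIntegral_congr_fun measurableSet_Ioi fun s hs => ?_
    by_cases hsc : s ≤ c
    · rw [Set.indicator_of_mem (Set.mem_Ioc.mpr ⟨Set.mem_Ioi.mp hs, hsc⟩)]
    · have hh : ¬ (0 ≤ c - s) := by push_neg at hsc ⊢; linarith
      have hzero : H s = 0 := by simp only [hH, hW, if_neg hh, mul_zero]
      rw [Set.indicator_of_notMem (fun hmem => hsc hmem.2), hzero]
  have h4b : ∫ s in Ioi (0:ℝ), (Ioc (0:ℝ) c).indicator H s = ∫ s in Ioc (0:ℝ) c, H s := by
    rw [integral_indicator measurableSet_Ioc, Measure.restrict_restrict measurableSet_Ioc,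
      Set.inter_eq_left.mpr Set.Ioc_subset_Ioi_self]
  -- step 4: interval integral and scaling substitution
  have h5 : ∫ s in Ioc (0:ℝ) c, H s = ∫ s in (0:ℝ)..c, H s :=
    (intervalIntegral.integral_of_le hc.le).symm
  have h6 : ∫ s in (0:ℝ)..c, H s = c * ∫ u in (0:ℝ)..1, H (c * u) := by
    have := intervalIntegral.smul_integral_comp_mul_left (a := (0:ℝ)) (b := (1:ℝ)) H c
    simp only [smul_eq_mul, mul_zero, mul_one] at this
    rw [this]
  -- step 5: simplify the integrand on [0,1]
  have h7 : ∫ u in (0:ℝ)..1, H (c * u) =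
      ∫ u in (0:ℝ)..1, (c ^ ((m:ℝ) - 1/2) * Real.sqrt c ^ k) *
        (u ^ ((m:ℝ) + 1/2 - 1) * (1 - u) ^ (((k:ℝ)/2 + 1) - 1)) := by
    refine intervalIntegral.integral_congr fun u hu => ?_
    rw [Set.uIcc_of_le zero_le_one] at hu
    obtain ⟨hu0, hu1⟩ := hu
    have hcu : c - c * u = c * (1 - u) := by ring
    have hnn : (0:ℝ) ≤ c * (1 - u) := by nlinarith
    rw [hH]
    simp only [hcu, hW, if_pos hnn]
    rw [Real.mul_rpow hc.le hu0, Real.sqrt_mul hc.le, mul_pow]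
    have h8 : Real.sqrt (1 - u) ^ k = (1 - u) ^ ((k:ℝ)/2) := by
      rw [← Real.rpow_natCast (Real.sqrt (1-u)) k, Real.sqrt_eq_rpow,
        ← Real.rpow_mul (by linarith : (0:ℝ) ≤ 1 - u)]
      congr 1
      ring
    rw [h8]
    have e1 : (m:ℝ) + 1/2 - 1 = (m:ℝ) - 1/2 := by ring
    have e2 : ((k:ℝ)/2 + 1) - 1 = (k:ℝ)/2 := by ring
    rw [e1, e2]
    ring
  -- step 6: beta integral
  have h9 : ∫ u in (0:ℝ)..1, (c ^ ((m:ℝ) - 1/2) * Real.sqrt c ^ k) *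
        (u ^ ((m:ℝ) + 1/2 - 1) * (1 - u) ^ (((k:ℝ)/2 + 1) - 1)) =
      (c ^ ((m:ℝ) - 1/2) * Real.sqrt c ^ k) *
        (Real.Gamma ((m:ℝ) + 1/2) * Real.Gamma ((k:ℝ)/2 + 1) /
          Real.Gamma (((m:ℝ) + 1/2) + ((k:ℝ)/2 + 1))) := by
    rw [intervalIntegral.integral_const_mul,
      my_realBeta (by positivity) (by positivity)]
  -- assemble
  rw [h1, h2, h3, h4a, h4b, h5, h6, h7, h9]
  have hcm : (2:ℝ) * (1/2 * (c * (c ^ ((m:ℝ) - 1/2) * Real.sqrt c ^ k))) =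
      c ^ m * Real.sqrt c ^ (k+1) := by
    have hA : c ^ ((m:ℝ) + 1/2) = c ^ m * Real.sqrt c := by
      rw [Real.rpow_add hc, Real.rpow_natCast, Real.sqrt_eq_rpow]
    have hB : c * c ^ ((m:ℝ) - 1/2) = c ^ ((m:ℝ) + 1/2) := by
      rw [show (m:ℝ) + 1/2 = 1 + ((m:ℝ) - 1/2) by ring, Real.rpow_add hc, Real.rpow_one]
    rw [pow_succ]
    calc (2:ℝ) * (1/2 * (c * (c ^ ((m:ℝ) - 1/2) * Real.sqrt c ^ k)))
        = (c * c ^ ((m:ℝ) - 1/2)) * Real.sqrt c ^ k := by ring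
      _ = (c ^ m * Real.sqrt c) * Real.sqrt c ^ k := by rw [hB, hA]
      _ = c ^ m * (Real.sqrt c ^ k * Real.sqrt c) := by ring
  calc (2:ℝ) * (1/2 * (c * ((c ^ ((m:ℝ) - 1/2) * Real.sqrt c ^ k) *
        (Real.Gamma ((m:ℝ) + 1/2) * Real.Gamma ((k:ℝ)/2 + 1) /
          Real.Gamma (((m:ℝ) + 1/2) + ((k:ℝ)/2 + 1))))))
      = ((2:ℝ) * (1/2 * (c * (c ^ ((m:ℝ) - 1/2) * Real.sqrt c ^ k)))) *
        (Real.Gamma ((m:ℝ) + 1/2) * Real.Gamma ((k:ℝ)/2 + 1) /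
          Real.Gamma (((m:ℝ) + 1/2) + ((k:ℝ)/2 + 1))) := by ring
    _ = c ^ m * Real.sqrt c ^ (k+1) *
        (Real.Gamma ((m:ℝ) + 1/2) * Real.Gamma ((k:ℝ)/2 + 1) /
          Real.Gamma (((m:ℝ) + 1/2) + ((k:ℝ)/2 + 1))) := by rw [hcm]

lemma my_even_moment (R : ℝ) (hR : 0 < R) (m k : ℕ) :
    (∫ x, (x 0) ^ (2 * m) ∂(scaledBallUnif (k + 1) R)) =
      ((k + 1 : ℕ) : ℝ) ^ m * R ^ (2 * m) * Real.Gamma ((m : ℝ) + 1 / 2) *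
        Real.Gamma (1 + ((k + 1 : ℕ) : ℝ) / 2) /
        (Real.sqrt π * Real.Gamma ((m : ℝ) + 1 + ((k + 1 : ℕ) : ℝ) / 2)) := by
  set c : ℝ := ((k + 1 : ℕ) : ℝ) * R ^ 2 with hcdef
  have hc : 0 < c := by positivity
  have hBset : scaledBall (k + 1) R = {x : Fin (k+1) → ℝ | ∑ i, x i ^ 2 ≤ c} := rfl
  have hB : MeasurableSet (scaledBall (k + 1) R) := by
    rw [hBset]; exact my_measurableSet_sumSq (k+1) c
  -- the measurable equivalence
  set e := MeasurableEquiv.piFinSuccAbove (fun _ : Fin (k+1) => ℝ) 0 with he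
  have hmp : MeasurePreserving e volume volume :=
    volume_preserving_piFinSuccAbove (fun _ : Fin (k+1) => ℝ) 0
  set S : Set (ℝ × (Fin k → ℝ)) := {q | q.1 ^ 2 + ∑ i, q.2 i ^ 2 ≤ c} with hSdef
  have hS : MeasurableSet S := by
    have : Continuous fun q : ℝ × (Fin k → ℝ) => q.1 ^ 2 + ∑ i, q.2 i ^ 2 :=
      (continuous_fst.pow 2).add
        (continuous_finset_sum _ fun i _ => ((continuous_apply i).comp continuous_snd).pow 2)
    exact measurableSet_le this.measurable measurable_const
  have he_app : ∀ x : Fin (k+1) → ℝ, e x = (x 0, fun j => x (Fin.succAbove 0 j)) := fun x => rfl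
  have hpre : e ⁻¹' S = scaledBall (k + 1) R := by
    ext x
    simp only [Set.mem_preimage, he_app, hSdef, Set.mem_setOf_eq, hBset]
    rw [← Fin.sum_univ_succAbove (fun i => x i ^ 2) 0]
  set g : ℝ × (Fin k → ℝ) → ℝ := S.indicator (fun q => q.1 ^ (2 * m)) with hg
  have hcomp : ∀ x, g (e x) = (scaledBall (k+1) R).indicator (fun y => (y 0) ^ (2 * m)) x := by
    intro x
    classical
    rw [hg, Set.indicator_apply, Set.indicator_apply]
    have hmem : e x ∈ S ↔ x ∈ scaledBall (k+1) R := by rw [← hpre]; rfl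
    by_cases hx : x ∈ scaledBall (k+1) R
    · rw [if_pos (hmem.mpr hx), if_pos hx, he_app]
    · rw [if_neg (fun h => hx (hmem.mp h)), if_neg hx]
  -- integrability
  have hSvol : (volume : Measure (ℝ × (Fin k → ℝ))) S = volume (scaledBall (k+1) R) := by
    rw [← hmp.measure_preimage hS.nullMeasurableSet, hpre]
  have hvolB : volume (scaledBall (k+1) R) =
      ENNReal.ofReal (Real.sqrt c ^ (k+1) * (Real.sqrt π ^ (k+1) / Real.Gamma ((k+1 : ℕ) / 2 + 1))) := by
    rw [hBset]; exact my_vol_sumSq (k+1) hc.le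
  have hSfin : (volume : Measure (ℝ × (Fin k → ℝ))) S < ⊤ := by
    rw [hSvol, hvolB]; exact ENNReal.ofReal_lt_top
  have hgm : AEStronglyMeasurable g (volume : Measure (ℝ × (Fin k → ℝ))) :=
    ((measurable_fst.pow_const (2*m)).indicator hS).aestronglyMeasurable
  have h_le : ∀ p : ℝ × (Fin k → ℝ), ‖g p‖ ≤ S.indicator (fun _ => c ^ m) p := by
    intro p
    classical
    rw [hg, Set.indicator_apply, Set.indicator_apply]
    by_cases hp : p ∈ S
    · rw [if_pos hp, if_pos hp, Real.norm_eq_abs, abs_of_nonneg (by rw [pow_mul]; positivity)]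
      have h1 : p.1 ^ 2 ≤ c := by
        have := hp
        rw [hSdef, Set.mem_setOf_eq] at this
        have hnn : 0 ≤ ∑ i, p.2 i ^ 2 := by positivity
        linarith
      calc p.1 ^ (2 * m) = (p.1 ^ 2) ^ m := by rw [pow_mul]
        _ ≤ c ^ m := pow_le_pow_left₀ (sq_nonneg _) h1 m
    · rw [if_neg hp, if_neg hp, norm_zero]
  have hgint : Integrable g (volume : Measure (ℝ × (Fin k → ℝ))) := by
    refine Integrable.mono' ?_ hgm (Filter.Eventually.of_forall h_le)
    rw [integrable_indicator_iff hS]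
    exact integrableOn_const hSfin.ne
  -- Fubini
  have hfub : ∫ p, g p = ∫ t : ℝ, ∫ y : Fin k → ℝ, g (t, y) := integral_prod g hgint
  have hinner : ∀ t : ℝ, (∫ y : Fin k → ℝ, g (t, y)) =
      (t ^ (2*m) * (if 0 ≤ c - t ^ 2 then Real.sqrt (c - t ^ 2) ^ k else 0)) *
        (Real.sqrt π ^ k / Real.Gamma ((k : ℝ) / 2 + 1)) := by
    intro t
    have hrw : ∀ y : Fin k → ℝ, g (t, y) =
        ({y : Fin k → ℝ | ∑ i, y i ^ 2 ≤ c - t ^ 2}).indicator (fun _ => t ^ (2*m)) y := by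
      intro y
      classical
      rw [hg, Set.indicator_apply, Set.indicator_apply]
      have : (t, y) ∈ S ↔ y ∈ {y : Fin k → ℝ | ∑ i, y i ^ 2 ≤ c - t ^ 2} := by
        rw [hSdef]; simp only [Set.mem_setOf_eq]; constructor <;> intro <;> linarith
      by_cases hy : y ∈ {y : Fin k → ℝ | ∑ i, y i ^ 2 ≤ c - t ^ 2}
      · rw [if_pos (this.mpr hy), if_pos hy]
      · rw [if_neg (fun h => hy (this.mp h)), if_neg hy]
    simp_rw [hrw]
    rw [integral_indicator_const _ (my_measurableSet_sumSq k (c - t^2)), smul_eq_mul]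
    by_cases hct : 0 ≤ c - t ^ 2
    · rw [measureReal_def, my_vol_sumSq k hct, ENNReal.toReal_ofReal (by positivity), if_pos hct]
      ring
    · rw [measureReal_def, my_vol_sumSq_neg k (by linarith), if_neg hct]
      simp
  -- compute the full-space integral
  have hmain : ∫ x, (scaledBall (k+1) R).indicator (fun y => (y 0) ^ (2 * m)) x =
      (c ^ m * Real.sqrt c ^ (k + 1) *
        (Real.Gamma ((m : ℝ) + 1 / 2) * Real.Gamma ((k : ℝ) / 2 + 1) /
          Real.Gamma (((m : ℝ) + 1 / 2) + ((k : ℝ) / 2 + 1)))) *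
        (Real.sqrt π ^ k / Real.Gamma ((k : ℝ) / 2 + 1)) := by
    calc ∫ x, (scaledBall (k+1) R).indicator (fun y => (y 0) ^ (2 * m)) x
        = ∫ x, g (e x) := by simp_rw [hcomp]
      _ = ∫ p, g p := hmp.integral_comp e.measurableEmbedding g
      _ = ∫ t : ℝ, ∫ y : Fin k → ℝ, g (t, y) := hfub
      _ = ∫ t : ℝ, (t ^ (2*m) * (if 0 ≤ c - t ^ 2 then Real.sqrt (c - t ^ 2) ^ k else 0)) *
            (Real.sqrt π ^ k / Real.Gamma ((k : ℝ) / 2 + 1)) := by simp_rw [hinner]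
      _ = (∫ t : ℝ, t ^ (2*m) * (if 0 ≤ c - t ^ 2 then Real.sqrt (c - t ^ 2) ^ k else 0)) *
            (Real.sqrt π ^ k / Real.Gamma ((k : ℝ) / 2 + 1)) := integral_mul_const _ _
      _ = _ := by rw [my_oneDim m k hc]
  -- put everything together
  rw [scaledBallUnif, integral_smul_measure, ENNReal.toReal_inv, smul_eq_mul,
    ← integral_indicator hB, hmain, hvolB, ENNReal.toReal_ofReal (by positivity)]
  -- final arithmetic
  have hG1 : 0 < Real.Gamma ((k : ℝ) / 2 + 1) := Real.Gamma_pos_of_pos (by positivity)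
  have hG2 : 0 < Real.Gamma (((k:ℕ)+1 : ℕ) / 2 + 1) := Real.Gamma_pos_of_pos (by positivity)
  have hG3 : 0 < Real.Gamma (((m : ℝ) + 1 / 2) + ((k : ℝ) / 2 + 1)) :=
    Real.Gamma_pos_of_pos (by positivity)
  have hsc : (0:ℝ) < Real.sqrt c := Real.sqrt_pos.mpr hc
  have hsp : (0:ℝ) < Real.sqrt π := Real.sqrt_pos.mpr Real.pi_pos
  have hargs1 : Real.Gamma (1 + ((k + 1 : ℕ) : ℝ) / 2) = Real.Gamma (((k+1 : ℕ) : ℝ) / 2 + 1) := by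
    rw [add_comm]
  have hargs2 : Real.Gamma ((m : ℝ) + 1 + ((k + 1 : ℕ) : ℝ) / 2) =
      Real.Gamma (((m : ℝ) + 1 / 2) + ((k : ℝ) / 2 + 1)) := by
    congr 1; push_cast; ring
  have hcm : c ^ m = ((k + 1 : ℕ) : ℝ) ^ m * R ^ (2 * m) := by
    rw [hcdef, mul_pow, pow_mul]
  rw [hargs1, hargs2, hcm]
  have hGa : 0 < Real.Gamma (((k+1 : ℕ) : ℝ) / 2 + 1) := Real.Gamma_pos_of_pos (by positivity)
  field_simp
  ring

lemma my_odd_moment (R : ℝ) (p k : ℕ) (hp : Odd p) :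
    (∫ x, (x 0) ^ p ∂(scaledBallUnif (k + 1) R)) = 0 := by
  classical
  set e : (Fin (k+1) → ℝ) ≃ᵐ (Fin (k+1) → ℝ) :=
    MeasurableEquiv.piCongrRight (fun i => if i = 0 then MeasurableEquiv.neg ℝ else
      MeasurableEquiv.refl ℝ) with he
  have he_app : ∀ (x : Fin (k+1) → ℝ) (i : Fin (k+1)),
      e x i = if i = 0 then -(x i) else x i := by
    intro x i
    by_cases hi : i = 0 <;> simp [he, MeasurableEquiv.piCongrRight, Equiv.piCongrRight, hi]
  have hmpc : ∀ i : Fin (k+1), MeasurePreserving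
      (⇑(if i = 0 then MeasurableEquiv.neg ℝ else MeasurableEquiv.refl ℝ))
      (volume : Measure ℝ) volume := by
    intro i
    by_cases hi : i = 0
    · simp only [hi, if_pos]
      exact ⟨measurable_neg, Measure.map_neg_eq_self volume⟩
    · simp only [hi, if_neg, not_false_iff]
      exact MeasurePreserving.id volume
  have hmp : MeasurePreserving e (volume : Measure (Fin (k+1) → ℝ)) volume := by
    have hco : ⇑e = fun (a : Fin (k+1) → ℝ) i =>
        ((if i = 0 then MeasurableEquiv.neg ℝ else MeasurableEquiv.refl ℝ) (a i)) := rfl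
    rw [hco]
    exact volume_preserving_pi hmpc
  have hsq : ∀ (x : Fin (k+1) → ℝ) (i : Fin (k+1)), (e x i) ^ 2 = (x i) ^ 2 := by
    intro x i
    rw [he_app]
    by_cases hi : i = 0 <;> simp [hi]
  have hpre : e ⁻¹' (scaledBall (k+1) R) = scaledBall (k+1) R := by
    ext x
    simp only [Set.mem_preimage, scaledBall, Set.mem_setOf_eq]
    rw [show (∑ i, e x i ^ 2) = ∑ i, x i ^ 2 from Finset.sum_congr rfl fun i _ => hsq x i]
  have hmpμ : MeasurePreserving e (scaledBallUnif (k+1) R) (scaledBallUnif (k+1) R) := by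
    constructor
    · exact e.measurable
    · rw [scaledBallUnif, Measure.map_smul]
      congr 1
      have hB : MeasurableSet (scaledBall (k+1) R) := my_measurableSet_sumSq (k+1) _
      calc Measure.map (⇑e) (volume.restrict (scaledBall (k+1) R))
          = Measure.map (⇑e) (volume.restrict (⇑e ⁻¹' scaledBall (k+1) R)) := by rw [hpre]
        _ = (Measure.map (⇑e) volume).restrict (scaledBall (k+1) R) :=
            (Measure.restrict_map e.measurable hB).symm
        _ = volume.restrict (scaledBall (k+1) R) := by rw [hmp.map_eq]
  have hint : ∫ x, (x 0) ^ p ∂(scaledBallUnif (k+1) R) =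
      ∫ x, ((e x) 0) ^ p ∂(scaledBallUnif (k+1) R) :=
    (hmpμ.integral_comp e.measurableEmbedding (fun y => (y 0) ^ p)).symm
  have hneg : ∀ x : Fin (k+1) → ℝ, ((e x) 0) ^ p = -((x 0) ^ p) := by
    intro x
    rw [he_app, if_pos rfl, hp.neg_pow]
  have hfinal : ∫ x, (x 0) ^ p ∂(scaledBallUnif (k+1) R) =
      - ∫ x, (x 0) ^ p ∂(scaledBallUnif (k+1) R) := by
    conv_lhs => rw [hint]
    simp_rw [hneg]
    rw [integral_neg]
  linarith

lemma my_factor_tendsto (j : ℕ) :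
    Tendsto (fun n : ℕ => (((n + 1 : ℕ) : ℝ)) / (1 + ((n + 1 : ℕ) : ℝ) / 2 + (j : ℝ)))
      atTop (nhds 2) := by
  have hφ : Tendsto (fun x : ℝ => ((1 + (j:ℝ)) / x + 1 / 2)⁻¹) atTop (nhds ((0 + 1/2)⁻¹)) := by
    refine Tendsto.inv₀ ?_ (by norm_num)
    exact (tendsto_const_nhds.div_atTop tendsto_id).add tendsto_const_nhds
  have h2 : ((0:ℝ) + 1/2)⁻¹ = 2 := by norm_num
  rw [h2] at hφ
  have hN : Tendsto (fun n : ℕ => (((n + 1 : ℕ) : ℝ))) atTop atTop := by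
    exact tendsto_natCast_atTop_atTop.comp (tendsto_add_atTop_nat 1)
  have hcomp := hφ.comp hN
  refine hcomp.congr fun n => ?_
  have hx : (0:ℝ) < ((n + 1 : ℕ) : ℝ) := by positivity
  have hd : (0:ℝ) < 1 + ((n + 1 : ℕ) : ℝ) / 2 + (j : ℝ) := by positivity
  simp only [Function.comp]
  field_simp
  ring

lemma my_limit_prod (m : ℕ) :
    Tendsto (fun n : ℕ => ∏ j ∈ Finset.range m,
        (((n + 1 : ℕ) : ℝ)) / (1 + ((n + 1 : ℕ) : ℝ) / 2 + (j : ℝ)))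
      atTop (nhds (2 ^ m)) := by
  have := tendsto_finset_prod (Finset.range m)
    (fun j _ => my_factor_tendsto j)
  simpa [Finset.prod_const] using this

lemma my_moment_rewrite (R : ℝ) (m n : ℕ) :
    ((n + 1 : ℕ) : ℝ) ^ m * R ^ (2 * m) * Real.Gamma ((m : ℝ) + 1 / 2) *
        Real.Gamma (1 + ((n + 1 : ℕ) : ℝ) / 2) /
        (Real.sqrt π * Real.Gamma ((m : ℝ) + 1 + ((n + 1 : ℕ) : ℝ) / 2)) =
      (Real.Gamma ((m : ℝ) + 1 / 2) / Real.sqrt π * R ^ (2 * m)) *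
        ∏ j ∈ Finset.range m,
          (((n + 1 : ℕ) : ℝ)) / (1 + ((n + 1 : ℕ) : ℝ) / 2 + (j : ℝ)) := by
  set N : ℝ := ((n + 1 : ℕ) : ℝ) with hN
  have hNpos : 0 < N := by positivity
  have hx : (0:ℝ) < 1 + N / 2 := by linarith
  have hΓ : Real.Gamma ((m : ℝ) + 1 + N / 2) =
      (∏ j ∈ Finset.range m, ((1 + N / 2) + (j : ℝ))) * Real.Gamma (1 + N / 2) := by
    rw [show (m : ℝ) + 1 + N / 2 = (1 + N / 2) + (m : ℝ) by ring]
    exact my_gamma_add_nat hx m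
  have hquot : (∏ j ∈ Finset.range m, N / (1 + N / 2 + (j : ℝ))) =
      N ^ m / ∏ j ∈ Finset.range m, ((1 + N / 2) + (j : ℝ)) := by
    rw [Finset.prod_div_distrib, Finset.prod_const, Finset.card_range]
  rw [hΓ, hquot]
  have hP : (0:ℝ) < ∏ j ∈ Finset.range m, ((1 + N / 2) + (j : ℝ)) :=
    Finset.prod_pos fun j _ => by positivity
  have hΓB : 0 < Real.Gamma (1 + N / 2) := Real.Gamma_pos_of_pos hx
  have hs : (0:ℝ) < Real.sqrt π := Real.sqrt_pos.mpr Real.pi_pos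
  field_simp

lemma my_lim_value (R : ℝ) (m : ℕ) :
    (Real.Gamma ((m : ℝ) + 1 / 2) / Real.sqrt π * R ^ (2 * m)) * 2 ^ m =
      ((Nat.doubleFactorial (2 * m - 1) : ℝ)) * R ^ (2 * m) := by
  have h := my_dfac m
  have hs : Real.sqrt π ≠ 0 := ne_of_gt (Real.sqrt_pos.mpr Real.pi_pos)
  rw [div_mul_eq_mul_div, div_mul_eq_mul_div, div_eq_iff hs]
  linear_combination (- R ^ (2 * m)) * h

end Helpers

/-- formulas (8.28)–(8.29): under the uniform measure on the ball
`∑ x_k² ≤ n R²`, `E[x₁^{2m}] = nᵐ R^{2m} Γ(m+1/2) Γ(1+n/2)/(√π Γ(m+1+n/2))`,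
`E[x₁^{2m}] → (2m-1)!! R^{2m}` as `n → ∞`, and all odd moments vanish. -/
theorem stmt15 (R : ℝ) (hR : 0 < R) (m : ℕ) :
    (∀ (n : ℕ) (_hn : 1 ≤ n),
      (∫ x, (x ⟨0, by omega⟩) ^ (2 * m) ∂(scaledBallUnif n R)) =
        (n : ℝ) ^ m * R ^ (2 * m) * Real.Gamma ((m : ℝ) + 1 / 2) *
          Real.Gamma (1 + (n : ℝ) / 2) /
          (Real.sqrt π * Real.Gamma ((m : ℝ) + 1 + (n : ℝ) / 2))) ∧
    Tendsto (fun n : ℕ => ∫ x, (x 0) ^ (2 * m) ∂(scaledBallUnif (n + 1) R))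
      atTop (nhds ((Nat.doubleFactorial (2 * m - 1) : ℝ) * R ^ (2 * m))) ∧
    (∀ (n : ℕ) (_hn : 1 ≤ n),
      (∫ x, (x ⟨0, by omega⟩) ^ (2 * m + 1) ∂(scaledBallUnif n R)) = 0) := by
  refine ⟨?_, ?_, ?_⟩
  · intro n hn
    obtain ⟨k, rfl⟩ : ∃ k, n = k + 1 := ⟨n - 1, by omega⟩
    have h0 : (⟨0, by omega⟩ : Fin (k + 1)) = 0 := by ext; simp
    simp only [h0]
    exact my_even_moment R hR m k
  · have hlim : Tendsto (fun n : ℕ =>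
        (Real.Gamma ((m : ℝ) + 1 / 2) / Real.sqrt π * R ^ (2 * m)) *
          ∏ j ∈ Finset.range m,
            (((n + 1 : ℕ) : ℝ)) / (1 + ((n + 1 : ℕ) : ℝ) / 2 + (j : ℝ)))
        atTop (nhds ((Real.Gamma ((m : ℝ) + 1 / 2) / Real.sqrt π * R ^ (2 * m)) * 2 ^ m)) :=
      (my_limit_prod m).const_mul _
    rw [my_lim_value R m] at hlim
    refine hlim.congr fun n => ?_
    rw [← my_moment_rewrite R m n]
    exact (my_even_moment R hR m n).symm
  · intro n hn
    obtain ⟨k, rfl⟩ : ∃ k, n = k + 1 := ⟨n - 1, by omega⟩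
    have h0 : (⟨0, by omega⟩ : Fin (k + 1)) = 0 := by ext; simp
    simp only [h0]
    exact my_odd_moment R (2 * m + 1) k ⟨m, by ring⟩
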